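/- Let V be a finite-dimensional vector space over an algebraically closed field of characteristic zero and φ ∈ GL(V). Write φ = s·u = u·s for its multiplicative Jordan decomposition with s diagonalizable and u unipotent. If N ∈ End(V) is nilpotent with φ N φ^{-1} = c·N for a scalar c, then s N s^{-1} = c·N and u N u^{-1} = N. -/

import Mathlib

open Polynomial LinearMap Module

private lemma aeval_mulLeft_eq {K A : Type*} [CommRing K] [Ring A] [Algebra K A]
    (a : A) (p : K[X]) :
    Polynomial.aeval (LinearMap.mulLeft K a) p = LinearMap.mulLeft K (Polynomial.aeval a p) := by
  induction p using Polynomial.induction_on' with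
  | add p q hp hq =>
      ext x
      simp [map_add, hp, hq, add_mul]
  | monomial n b =>
      ext x
      simp [Polynomial.aeval_monomial, LinearMap.pow_mulLeft, Algebra.smul_mul_assoc,
        Module.algebraMap_end_apply, Algebra.algebraMap_eq_smul_one, smul_mul_assoc]

private lemma aeval_mulRight_eq {K A : Type*} [CommRing K] [Ring A] [Algebra K A]
    (a : A) (p : K[X]) :
    Polynomial.aeval (LinearMap.mulRight K a) p = LinearMap.mulRight K (Polynomial.aeval a p) := by
  induction p using Polynomial.induction_on' with
  | add p q hp hq =>
      ext x
      simp [map_add, hp, hq, mul_add]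
  | monomial n b =>
      ext x
      simp [Polynomial.aeval_monomial, LinearMap.pow_mulRight, Module.algebraMap_end_apply,
        Algebra.algebraMap_eq_smul_one, mul_smul_comm, smul_mul_assoc, mul_assoc]

private lemma comm_inv_aux {A : Type*} [Ring A] {a b b' : A}
    (h : a * b = b * a) (h1 : b * b' = 1) (h2 : b' * b = 1) : a * b' = b' * a := by
  have e : a * b' = b' * (b * (a * b')) := by rw [← mul_assoc, h2, one_mul]
  rw [e, ← mul_assoc b a b', ← h, mul_assoc a b b', h1, mul_one]

private lemma commute_mulLeft_mulLeft {K A : Type*} [CommRing K] [Ring A] [Algebra K A]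
    {a b : A} (h : a * b = b * a) :
    Commute (LinearMap.mulLeft K a) (LinearMap.mulLeft K b) := by
  show _ * _ = _ * _
  ext x
  simp only [Module.End.mul_apply, LinearMap.mulLeft_apply, ← mul_assoc, h]

private lemma commute_mulRight_mulRight {K A : Type*} [CommRing K] [Ring A] [Algebra K A]
    {a b : A} (h : a * b = b * a) :
    Commute (LinearMap.mulRight K a) (LinearMap.mulRight K b) := by
  show _ * _ = _ * _
  ext x
  simp only [Module.End.mul_apply, LinearMap.mulRight_apply, mul_assoc, h]

set_option maxHeartbeats 1000000 in
/-- if `φ = s·u = u·s` is the multiplicative Jordan decomposition of an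
invertible endomorphism of a finite-dimensional space over an algebraically closed field of
characteristic zero (`s` semisimple, `u` unipotent), and `N` is nilpotent with
`φ N φ⁻¹ = c·N`, then `s N s⁻¹ = c·N` and `u N u⁻¹ = N`. -/
theorem stmt_8 {k : Type*} [Field k] [IsAlgClosed k] [CharZero k]
    {V : Type*} [AddCommGroup V] [Module k V] [FiniteDimensional k V]
    (φ s u : Module.End k V) (hφ : IsUnit φ)
    (hdec : φ = s * u) (hcomm : s * u = u * s)
    (hs : s.IsSemisimple) (hu : IsNilpotent (u - 1))
    (N : Module.End k V) (hN : IsNilpotent N)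
    (c : k) (hc : c ≠ 0) (hrel : φ * N = c • (N * φ)) :
    s * N = c • (N * s) ∧ u * N = N * u := by
  classical
  -- inverse of u
  have huunit : IsUnit u := by
    have := hu.isUnit_add_one
    rwa [sub_add_cancel] at this
  obtain ⟨uu, huu⟩ := huunit
  set u' : Module.End k V := ((uu⁻¹ : (Module.End k V)ˣ) : Module.End k V) with hu'def
  have huu1 : u * u' = 1 := by rw [← huu]; exact uu.mul_inv
  have huu2 : u' * u = 1 := by rw [← huu]; exact uu.inv_mul
  -- s is a unit, hence injective
  have hsunit : IsUnit s := by
    have h1 : φ * u' = s := by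
      rw [hdec, mul_assoc, huu1, mul_one]
    have := hφ.mul (uu⁻¹.isUnit)
    rwa [← hu'def, h1] at this
  -- explicit inverse of s inside the adjoin algebra
  set p : k[X] := minpoly k s with hpdef
  have hsinj : Function.Injective s := by
    obtain ⟨su, hsu⟩ := hsunit
    have h1 : ((su⁻¹ : (Module.End k V)ˣ) : Module.End k V) * s = 1 := by
      rw [← hsu]; exact su.inv_mul
    intro x y hxy
    calc x = (((su⁻¹ : (Module.End k V)ˣ) : Module.End k V) * s) x := by rw [h1]; rfl
      _ = (((su⁻¹ : (Module.End k V)ˣ) : Module.End k V) * s) y := by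
          simp only [Module.End.mul_apply, hxy]
      _ = y := by rw [h1]; rfl
  have h0 : p.coeff 0 ≠ 0 := LinearMap.minpoly_coeff_zero_of_injective hsinj
  set g : Module.End k V := Polynomial.aeval s p.divX with hgdef
  have hgs : g * s = s * g := by
    have h1 : g * s = Polynomial.aeval s (p.divX * X) := by rw [map_mul, aeval_X]
    have h2 : s * g = Polynomial.aeval s (X * p.divX) := by rw [map_mul, aeval_X]
    rw [h1, h2, mul_comm p.divX X]
  have hkey : g * s + (p.coeff 0) • (1 : Module.End k V) = 0 := by
    have := minpoly.aeval k s
    rw [← hpdef, ← p.divX_mul_X_add] at this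
    rw [map_add, map_mul, aeval_X, aeval_C, Algebra.algebraMap_eq_smul_one] at this
    exact this
  set s' : Module.End k V := (-(p.coeff 0)⁻¹) • g with hs'def
  have hss'2 : s' * s = 1 := by
    have h1 : g * s = -((p.coeff 0) • (1 : Module.End k V)) := by
      rw [eq_neg_iff_add_eq_zero]; exact hkey
    rw [hs'def, smul_mul_assoc, h1, smul_neg, neg_smul, neg_neg, smul_smul,
      inv_mul_cancel₀ h0, one_smul]
  have hss'1 : s * s' = 1 := by
    rw [hs'def, mul_smul_comm, ← hgs, ← smul_mul_assoc, ← hs'def, hss'2]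
  -- s' is semisimple
  have hs' : s'.IsSemisimple := by
    refine hs.of_mem_adjoin_singleton ?_
    refine Subalgebra.smul_mem _ ?_ _
    rw [Algebra.adjoin_singleton_eq_range_aeval]
    exact ⟨p.divX, rfl⟩
  -- commutation relations
  have hsu' : s * u' = u' * s := comm_inv_aux hcomm huu1 huu2
  have hus' : u * s' = s' * u := comm_inv_aux hcomm.symm hss'1 hss'2
  have hs'u' : s' * u' = u' * s' := comm_inv_aux hus'.symm huu1 huu2
  have hφs : φ * s = s * φ := by
    rw [hdec, mul_assoc, ← hcomm, ← mul_assoc]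
  have hφ's'0 : (u' * s') * s' = s' * (u' * s') := by
    conv_lhs => rw [← hs'u']
    rw [mul_assoc]
  set φ' : Module.End k V := u' * s' with hφ'def
  have hφ1 : φ * φ' = 1 := by
    rw [hdec, hφ'def, mul_assoc, ← mul_assoc u u' s', huu1, one_mul, hss'1]
  have hφ2 : φ' * φ = 1 := by
    rw [hdec, hφ'def, mul_assoc, ← mul_assoc s' s u, hss'2, one_mul, huu2]
  have hφ's' : φ' * s' = s' * φ' := hφ's'0
  -- the operators on End V
  set A : Module.End k (Module.End k V) :=
    LinearMap.mulLeft k φ * LinearMap.mulRight k φ' with hAdef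
  set Ψ : Module.End k (Module.End k V) :=
    LinearMap.mulLeft k s * LinearMap.mulRight k s' with hΨdef
  set U : Module.End k (Module.End k V) :=
    LinearMap.mulLeft k u * LinearMap.mulRight k u' with hUdef
  have hA_apply : ∀ X, A X = φ * (X * φ') := fun X => rfl
  have hΨ_apply : ∀ X, Ψ X = s * (X * s') := fun X => rfl
  have hU_apply : ∀ X, U X = u * (X * u') := fun X => rfl
  -- A N = c • N
  have hA_eig : A N = c • N := by
    rw [hA_apply, ← mul_assoc, hrel, smul_mul_assoc, mul_assoc, hφ1, mul_one]
  -- A = Ψ * U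
  have hAeqΨU : A = Ψ * U := by
    ext X
    simp only [hAdef, hΨdef, hUdef, Module.End.mul_apply, LinearMap.mulLeft_apply,
      LinearMap.mulRight_apply, hdec, hφ'def, mul_assoc]
  -- Commute A Ψ
  have c1 : Commute (LinearMap.mulLeft k φ) Ψ :=
    (commute_mulLeft_mulLeft hφs).mul_right (LinearMap.commute_mulLeft_right φ s')
  have c2 : Commute (LinearMap.mulRight k φ') Ψ :=
    ((LinearMap.commute_mulLeft_right s φ').symm).mul_right
      (commute_mulRight_mulRight hφ's')
  have hAΨ : Commute A Ψ := c1.mul_left c2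
  -- Commute Ψ U
  have hsu'2 : s * u = u * s := hcomm
  have hu's' : u' * s' = s' * u' := hs'u'.symm
  have d1 : Commute (LinearMap.mulLeft k s) U :=
    (commute_mulLeft_mulLeft hsu'2).mul_right (LinearMap.commute_mulLeft_right s u')
  have d2 : Commute (LinearMap.mulRight k s') U :=
    ((LinearMap.commute_mulLeft_right u s').symm).mul_right
      (commute_mulRight_mulRight hu's'.symm)
  have hΨU : Commute Ψ U := d1.mul_left d2
  -- U - 1 is nilpotent
  have hu'nil : IsNilpotent (u' - 1) := by
    have h1 : u' - 1 = u' * (1 - u) := by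
      rw [mul_sub, mul_one, huu2]
    have h2 : IsNilpotent (1 - u : Module.End k V) := by
      have := hu.neg
      rwa [neg_sub] at this
    have h3 : Commute u' (1 - u) := by
      refine (Commute.one_right u').sub_right ?_
      show u' * u = u * u'
      rw [huu2, huu1]
    rw [h1]
    exact h3.isNilpotent_mul_left h2
  have hUnil : IsNilpotent (U - 1) := by
    have hsplit : U - 1 =
        LinearMap.mulLeft k (u - 1) * LinearMap.mulRight k u'
          + LinearMap.mulRight k (u' - 1) := by
      ext X
      simp only [LinearMap.sub_apply, LinearMap.add_apply, Module.End.mul_apply,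
        LinearMap.mulLeft_apply, LinearMap.mulRight_apply, Module.End.one_apply,
        hUdef, sub_mul, mul_sub, mul_one, one_mul]
      abel
    have n1 : IsNilpotent (LinearMap.mulLeft k (u - 1)) := by
      obtain ⟨m, hm⟩ := hu
      exact ⟨m, by rw [LinearMap.pow_mulLeft, hm, LinearMap.mulLeft_zero_eq_zero]⟩
    have n2 : IsNilpotent (LinearMap.mulLeft k (u - 1) * LinearMap.mulRight k u') :=
      (LinearMap.commute_mulLeft_right (u - 1) u').isNilpotent_mul_right n1
    have n3 : IsNilpotent (LinearMap.mulRight k (u' - 1)) := by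
      obtain ⟨m, hm⟩ := hu'nil
      exact ⟨m, by rw [LinearMap.pow_mulRight, hm, LinearMap.mulRight_zero_eq_zero]⟩
    have hcm : Commute (LinearMap.mulLeft k (u - 1) * LinearMap.mulRight k u')
        (LinearMap.mulRight k (u' - 1)) := by
      refine Commute.mul_left (LinearMap.commute_mulLeft_right (u - 1) (u' - 1)) ?_
      exact commute_mulRight_mulRight (by rw [mul_sub, sub_mul, mul_one, one_mul])
    rw [hsplit]
    exact hcm.isNilpotent_add n2 n3
  -- A - Ψ nilpotent
  have hnil : IsNilpotent (A - Ψ) := by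
    have h1 : A - Ψ = Ψ * (U - 1) := by rw [mul_sub, mul_one, hAeqΨU]
    rw [h1]
    exact (hΨU.sub_right (Commute.one_right Ψ)).isNilpotent_mul_left hUnil
  -- Ψ semisimple
  have hLs : Module.End.IsSemisimple (LinearMap.mulLeft k s) := by
    refine Module.End.isSemisimple_of_squarefree_aeval_eq_zero hs.minpoly_squarefree ?_
    rw [aeval_mulLeft_eq, minpoly.aeval, LinearMap.mulLeft_zero_eq_zero]
  have hRs' : Module.End.IsSemisimple (LinearMap.mulRight k s') := by
    refine Module.End.isSemisimple_of_squarefree_aeval_eq_zero hs'.minpoly_squarefree ?_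
    rw [aeval_mulRight_eq, minpoly.aeval, LinearMap.mulRight_zero_eq_zero]
  have hΨss : Ψ.IsSemisimple :=
    Module.End.IsSemisimple.mul_of_commute (LinearMap.commute_mulLeft_right s s') hLs hRs'
  -- N is an eigenvector of A
  have hmem : N ∈ A.genEigenspace c 1 := by
    rw [Module.End.mem_genEigenspace]
    refine ⟨1, le_refl 1, ?_⟩
    rw [LinearMap.mem_ker, pow_one, LinearMap.sub_apply, hA_eig]
    simp
  have hΨN : Ψ N = c • N :=
    Module.End.apply_eq_of_mem_of_comm_of_isFinitelySemisimple_of_isNil hmem hAΨ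
      hΨss.isFinitelySemisimple hnil
  have hΨN' : s * (N * s') = c • N := by rw [← hΨ_apply, hΨN]
  constructor
  · calc s * N = s * (N * (s' * s)) := by rw [hss'2, mul_one]
      _ = (s * (N * s')) * s := by simp only [mul_assoc]
      _ = (c • N) * s := by rw [hΨN']
      _ = c • (N * s) := smul_mul_assoc c N s
  · -- from Ψ (U N) = Ψ N deduce U N = N
    have h1 : Ψ (U N) = Ψ N := by
      rw [← Module.End.mul_apply, ← hAeqΨU, hA_eig, hΨN]
    have h2 : s * ((u * (N * u')) * s') = s * (N * s') := h1
    have hcl : ∀ X Y : Module.End k V, s * X = s * Y → X = Y := by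
      intro X Y h
      have := congrArg (fun z => s' * z) h
      simpa only [← mul_assoc, hss'2, one_mul] using this
    have h3 : (u * (N * u')) * s' = N * s' := hcl _ _ h2
    have h4 : u * (N * u') = N := by
      have := congrArg (fun z => z * s) h3
      simpa only [mul_assoc, hss'2, mul_one] using this
    calc u * N = u * (N * (u' * u)) := by rw [huu2, mul_one]
      _ = (u * (N * u')) * u := by simp only [mul_assoc]
      _ = N * u := by rw [h4]
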